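/- arXiv:0808.1404 — 3 statements merged into one kernel-verified Lean document; each statement's English description precedes it below -/
import Mathlib

section
/- Let S be a semigroup and ω a weight on S. Define ω_l(t) = sup_{s∈S} ω(st)/ω(t) and ω_r(t) = sup_{s∈S} ω(ts)/ω(t). If ω_l ∈ c₀(S) and ω_r ∈ c₀(S), then 1_{t⁻¹s}/ω ∈ c₀(S) and 1_{st⁻¹}/ω ∈ c₀(S) for all s, t ∈ S, so ℓ¹(S,ω) is a dual Banach algebra with predual c₀(S). -/
open Set Filter

/-- A function on `S` "vanishes at infinity" (belongs to `c₀(S)`). -/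
def IsC0 {S : Type*} (g : S → ℝ) : Prop := ∀ ε > 0, {x | ε ≤ |g x|}.Finite

/-- A weight on a semigroup: positive and submultiplicative. -/
def IsWeight {S : Type*} [Mul S] (ω : S → ℝ) : Prop :=
  (∀ s, 0 < ω s) ∧ ∀ s t, ω (s * t) ≤ ω s * ω t

/-- Membership in `ℓ¹(S, ω)`. -/
def MemL1 {S : Type*} (ω f : S → ℝ) : Prop := Summable fun s => |f s| * ω s

/-- Membership in `c₀(S, ω) = {φ ∈ ℓ∞(S,ω) : φ/ω ∈ c₀(S)}`. -/
def IsC0w {S : Type*} (ω φ : S → ℝ) : Prop := IsC0 fun s => φ s / ω s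

/-- The left module action `φ · f` of `f ∈ ℓ¹(S,ω)` on `φ ∈ ℓ∞(S,ω)`,
determined by `⟨φ·f, g⟩ = ⟨φ, f*g⟩`; pointwise `(φ·f)(r) = ∑_u f(u) φ(u r)`. -/
noncomputable def act {S : Type*} [Mul S] (f φ : S → ℝ) : S → ℝ :=
  fun r => ∑' u, f u * φ (u * r)

/-- The right module action `f · φ`, determined by `⟨f·φ, g⟩ = ⟨φ, g*f⟩`;
pointwise `(f·φ)(r) = ∑_u f(u) φ(r u)`. -/
noncomputable def actR {S : Type*} [Mul S] (f φ : S → ℝ) : S → ℝ :=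
  fun r => ∑' u, f u * φ (r * u)

/-- A semigroup is weakly cancellative if `s⁻¹F` and `Fs⁻¹` are finite
for every `s` and every finite `F`. -/
def WeaklyCancellative (S : Type*) [Mul S] : Prop :=
  ∀ (s : S) (F : Finset S), {t | s * t ∈ F}.Finite ∧ {t | t * s ∈ F}.Finite

lemma isC0_bound {S : Type*} {g : S → ℝ} (hg : IsC0 g) :
    ∃ M : ℝ, 0 ≤ M ∧ ∀ x, |g x| ≤ M := by
  have hfin := hg 1 one_pos
  refine ⟨1 + ∑ x ∈ hfin.toFinset, |g x|, by positivity, fun x => ?_⟩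
  by_cases hx : 1 ≤ |g x|
  · have hmem : x ∈ hfin.toFinset := by simpa using hx
    have h2 : |g x| ≤ ∑ y ∈ hfin.toFinset, |g y| :=
      Finset.single_le_sum (f := fun y => |g y|) (fun y _ => abs_nonneg _) hmem
    linarith
  · push_neg at hx
    have : 0 ≤ ∑ y ∈ hfin.toFinset, |g y| :=
      Finset.sum_nonneg fun y _ => abs_nonneg _
    linarith

lemma ind_c0 {S : Type*} (ω : S → ℝ) (hpos : ∀ s, 0 < ω s) (m : S → S → S)
    (W : S → ℝ) (hWle : ∀ u r, ω (m u r) / ω r ≤ W r) (hWc0 : IsC0 W)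
    (s t : S) :
    IsC0 fun r => Set.indicator {r | m t r = s} (1 : S → ℝ) r / ω r := by
  intro ε hε
  refine (hWc0 (ε * ω s) (mul_pos hε (hpos s))).subset ?_
  intro r hr
  simp only [mem_setOf_eq] at hr ⊢
  by_cases h : m t r = s
  · have hind : Set.indicator {r | m t r = s} (1 : S → ℝ) r = 1 := by
      simp [Set.indicator_of_mem, h, mem_setOf_eq]
    rw [hind] at hr
    rw [abs_of_pos (one_div_pos.mpr (hpos r))] at hr
    have h1 : ε * ω r ≤ 1 := by
      have := (le_div_iff₀ (hpos r)).mp hr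
      linarith
    have h2 : ω s / ω r ≤ W r := by
      have := hWle t r; rwa [h] at this
    have h3 : ε * ω s ≤ ω s / ω r := by
      rw [le_div_iff₀ (hpos r)]
      nlinarith [hpos r, hpos s]
    have hW0 : 0 ≤ W r := le_trans (div_nonneg (hpos s).le (hpos r).le) h2
    rw [abs_of_nonneg hW0]
    linarith
  · have hind : Set.indicator {r | m t r = s} (1 : S → ℝ) r = 0 := by
      simp [Set.indicator_of_notMem, h, mem_setOf_eq]
    rw [hind] at hr
    simp at hr
    linarith

lemma act_c0 {S : Type*} (ω : S → ℝ) (hpos : ∀ s, 0 < ω s) (m : S → S → S)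
    (hsub : ∀ u r, ω (m u r) ≤ ω u * ω r)
    (W : S → ℝ) (hWle : ∀ u r, ω (m u r) / ω r ≤ W r) (hWc0 : IsC0 W)
    (φ : S → ℝ) (hφ : IsC0 fun x => φ x / ω x)
    (f : S → ℝ) (hf : Summable fun u => |f u| * ω u) :
    IsC0 fun r => (∑' u, f u * φ (m u r)) / ω r := by
  obtain ⟨M, hM0, hMb⟩ := isC0_bound hφ
  have hφb : ∀ x, |φ x| ≤ M * ω x := by
    intro x
    have h := hMb x
    rw [abs_div, abs_of_pos (hpos x)] at h
    exact (div_le_iff₀ (hpos x)).mp h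
  have hterm : ∀ r u, |f u * φ (m u r)| ≤ (M * ω r) * (|f u| * ω u) := by
    intro r u
    rw [abs_mul]
    calc |f u| * |φ (m u r)| ≤ |f u| * (M * ω (m u r)) :=
          mul_le_mul_of_nonneg_left (hφb _) (abs_nonneg _)
    _ ≤ |f u| * (M * (ω u * ω r)) :=
          mul_le_mul_of_nonneg_left
            (mul_le_mul_of_nonneg_left (hsub u r) hM0) (abs_nonneg _)
    _ = (M * ω r) * (|f u| * ω u) := by ring
  have hsumabs : ∀ r, Summable fun u => |f u * φ (m u r)| := fun r =>
    Summable.of_nonneg_of_le (fun u => abs_nonneg _) (hterm r) (hf.mul_left (M * ω r))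
  intro ε hε
  set δ := ε / (2 * (M + 1)) with hδdef
  have hδpos : 0 < δ := by positivity
  obtain ⟨F, hF⟩ : ∃ F : Finset S, ∑' (u : {u // u ∉ F}), (|f (u:S)| * ω u) < δ := by
    have h := ((tendsto_tsum_compl_atTop_zero
      (fun u => |f u| * ω u)).eventually (gt_mem_nhds hδpos)).exists
    simpa using h
  set C := ∑ u ∈ F, |f u| with hCdef
  have hC0 : 0 ≤ C := Finset.sum_nonneg fun u _ => abs_nonneg _
  have hdenom : (0:ℝ) < 2 * (C * M + 1) := by nlinarith
  set ε' := ε / (2 * (C * M + 1)) with hε'def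
  have hε'pos : 0 < ε' := div_pos hε hdenom
  refine (hWc0 ε' hε'pos).subset ?_
  intro r hr
  simp only [mem_setOf_eq] at hr ⊢
  have hWr0 : 0 ≤ W r :=
    le_trans (div_nonneg (hpos (m r r)).le (hpos r).le) (hWle r r)
  have habs : |∑' u, f u * φ (m u r)| ≤ ∑' u, |f u * φ (m u r)| := by
    have h := norm_tsum_le_tsum_norm (f := fun u => f u * φ (m u r))
        (by simpa only [Real.norm_eq_abs] using hsumabs r)
    simpa only [Real.norm_eq_abs] using h
  have hsplit : ∑ u ∈ F, |f u * φ (m u r)|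
      + ∑' (u : {u // u ∉ F}), |f (u:S) * φ (m (u:S) r)| = ∑' u, |f u * φ (m u r)| := by
    exact Summable.sum_add_tsum_compl (s := F) (hsumabs r)
  have hfin : ∑ u ∈ F, |f u * φ (m u r)| ≤ C * M * W r * ω r := by
    have hs : ∀ u ∈ F, |f u * φ (m u r)| ≤ |f u| * (M * (W r * ω r)) := by
      intro u _
      rw [abs_mul]
      have h1 : |φ (m u r)| ≤ M * ω (m u r) := hφb _
      have h2 : ω (m u r) ≤ W r * ω r := by
        have := hWle u r
        rw [div_le_iff₀ (hpos r)] at this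
        linarith
      calc |f u| * |φ (m u r)| ≤ |f u| * (M * ω (m u r)) :=
            mul_le_mul_of_nonneg_left h1 (abs_nonneg _)
      _ ≤ |f u| * (M * (W r * ω r)) :=
            mul_le_mul_of_nonneg_left
              (mul_le_mul_of_nonneg_left h2 hM0) (abs_nonneg _)
    calc ∑ u ∈ F, |f u * φ (m u r)| ≤ ∑ u ∈ F, |f u| * (M * (W r * ω r)) :=
          Finset.sum_le_sum hs
    _ = C * M * W r * ω r := by rw [hCdef, ← Finset.sum_mul]; ring
  have htail : ∑' (u : {u // u ∉ F}), |f (u:S) * φ (m (u:S) r)| ≤ (M * ω r) * δ := by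
    have h1 : ∑' (u : {u // u ∉ F}), |f (u:S) * φ (m (u:S) r)|
        ≤ ∑' (u : {u // u ∉ F}), (M * ω r) * (|f (u:S)| * ω u) := by
      refine Summable.tsum_le_tsum (fun u => hterm r u) ?_ ?_
      · exact (hsumabs r).subtype _
      · exact ((hf.mul_left (M * ω r)).subtype _)
    have h2 : ∑' (u : {u // u ∉ F}), (M * ω r) * (|f (u:S)| * ω u)
        = (M * ω r) * ∑' (u : {u // u ∉ F}), (|f (u:S)| * ω u) := tsum_mul_left
    have h3 : (M * ω r) * ∑' (u : {u // u ∉ F}), (|f (u:S)| * ω u) ≤ (M * ω r) * δ := by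
      nlinarith [mul_nonneg hM0 (hpos r).le, hF]
    linarith [h1, h2.le, h2.ge]
  have hbound : |∑' u, f u * φ (m u r)| ≤ C * M * W r * ω r + M * ω r * δ := by
    rw [← hsplit] at habs
    nlinarith
  have hdiv : ε ≤ C * M * W r + M * δ := by
    rw [abs_div, abs_of_pos (hpos r), le_div_iff₀ (hpos r)] at hr
    nlinarith [hpos r]
  have hδε : δ * (2 * (M + 1)) = ε := div_mul_cancel₀ _ (by positivity)
  have hMδ : M * δ < ε / 2 := by nlinarith
  have hkey : ε / 2 < C * M * W r := by linarith
  rw [abs_of_nonneg hWr0]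
  rw [hε'def, div_le_iff₀ hdenom]
  nlinarith

/-- If `ω_l(t) = sup_s ω(st)/ω(t)` and `ω_r(t) = sup_s ω(ts)/ω(t)` both belong to `c₀(S)`,
then `1_{t⁻¹s}/ω, 1_{st⁻¹}/ω ∈ c₀(S)` for all `s,t`, so `ℓ¹(S,ω)` is a dual Banach algebra
with predual `c₀(S)`. -/
theorem dual_of_wl_wr_c0 {S : Type*} [Semigroup S] {ω : S → ℝ} (hω : IsWeight ω)
    (hbl : ∀ t : S, BddAbove (Set.range fun s => ω (s * t) / ω t))
    (hbr : ∀ t : S, BddAbove (Set.range fun s => ω (t * s) / ω t))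
    (hl : IsC0 fun t : S => ⨆ s : S, ω (s * t) / ω t)
    (hr : IsC0 fun t : S => ⨆ s : S, ω (t * s) / ω t) :
    (∀ s t : S,
        (IsC0 fun r => Set.indicator {r | t * r = s} (1 : S → ℝ) r / ω r) ∧
        (IsC0 fun r => Set.indicator {r | r * t = s} (1 : S → ℝ) r / ω r)) ∧
      (∀ φ : S → ℝ, IsC0w ω φ → ∀ f : S → ℝ, MemL1 ω f →
        IsC0w ω (act f φ) ∧ IsC0w ω (actR f φ)) := by
  constructor
  · intro s t
    exact ⟨ind_c0 ω hω.1 (fun u r => u * r) (fun r => ⨆ s : S, ω (s * r) / ω r)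
        (fun u r => le_ciSup (hbl r) u) hl s t,
      ind_c0 ω hω.1 (fun u r => r * u) (fun r => ⨆ s : S, ω (r * s) / ω r)
        (fun u r => le_ciSup (hbr r) u) hr s t⟩
  · intro φ hφ f hf
    exact ⟨act_c0 ω hω.1 (fun u r => u * r) (fun u r => hω.2 u r)
        (fun r => ⨆ s : S, ω (s * r) / ω r) (fun u r => le_ciSup (hbl r) u) hl φ hφ f hf,
      act_c0 ω hω.1 (fun u r => r * u) (fun u r => (hω.2 r u).trans_eq (mul_comm _ _))
        (fun r => ⨆ s : S, ω (r * s) / ω r) (fun u r => le_ciSup (hbr r) u) hr φ hφ f hf⟩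
end

section
/- Let S be a semigroup and ω a weight on S with 1/ω ∈ c₀(S). Then 1_{t⁻¹s}/ω ∈ c₀(S) and 1_{st⁻¹}/ω ∈ c₀(S) for all s, t ∈ S, and hence ℓ¹(S,ω) is a dual Banach algebra with predual c₀(S). -/
open Set Filter

lemma isC0_bdd {S : Type*} (g : S → ℝ) (h : IsC0 g) : ∃ M, 1 ≤ M ∧ ∀ x, |g x| ≤ M := by
  classical
  refine ⟨1 + ∑ x ∈ (h 1 one_pos).toFinset, |g x|, ?_, ?_⟩
  · have : (0:ℝ) ≤ ∑ x ∈ (h 1 one_pos).toFinset, |g x| :=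
      Finset.sum_nonneg fun _ _ => abs_nonneg _
    linarith
  · intro x
    by_cases hx : 1 ≤ |g x|
    · have hxF : x ∈ (h 1 one_pos).toFinset := by
        simp only [Set.Finite.mem_toFinset, Set.mem_setOf_eq]; exact hx
      have := Finset.single_le_sum (f := fun x => |g x|)
        (fun i _ => abs_nonneg _) hxF
      linarith
    · push_neg at hx
      have : (0:ℝ) ≤ ∑ x ∈ (h 1 one_pos).toFinset, |g x| :=
        Finset.sum_nonneg fun _ _ => abs_nonneg _
      linarith

lemma ind_c0_s9 {S : Type*} {ω : S → ℝ} (hω : ∀ s, 0 < ω s) (h : IsC0 fun s => 1 / ω s)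
    (A : Set S) : IsC0 fun r => Set.indicator A (1 : S → ℝ) r / ω r := by
  intro ε hε
  apply (h ε hε).subset
  intro x hx
  simp only [Set.mem_setOf_eq] at hx ⊢
  have h0 : 0 ≤ Set.indicator A (1 : S → ℝ) x :=
    Set.indicator_nonneg (fun _ _ => by norm_num) x
  have h1 : Set.indicator A (1 : S → ℝ) x ≤ 1 := by
    by_cases hxA : x ∈ A
    · simp [Set.indicator_of_mem hxA]
    · simp [Set.indicator_of_notMem hxA]
  have hwx := hω x
  calc ε ≤ |Set.indicator A (1 : S → ℝ) x / ω x| := hx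
    _ = Set.indicator A (1 : S → ℝ) x / ω x := abs_of_nonneg (by positivity)
    _ ≤ 1 / ω x := by gcongr
    _ = |1 / ω x| := (abs_of_pos (by positivity)).symm


set_option maxHeartbeats 1000000 in
lemma key_c0 {S : Type*} {ω : S → ℝ} (hωpos : ∀ s, 0 < ω s)
    (h : IsC0 fun s => 1 / ω s) (φ f : S → ℝ) (hφ : IsC0 fun s => φ s / ω s)
    (hf : Summable fun s => |f s| * ω s) (m : S → S → S)
    (hm : ∀ u r, ω (m u r) ≤ ω u * ω r) :
    IsC0 fun r => (∑' u, f u * φ (m u r)) / ω r := by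
  classical
  obtain ⟨M, hM1, hM⟩ := isC0_bdd _ hφ
  obtain ⟨K, hK1, hK⟩ := isC0_bdd _ h
  have hφbd : ∀ s, |φ s| ≤ M * ω s := by
    intro s
    have h1 := hM s
    rw [abs_div, abs_of_pos (hωpos s), div_le_iff₀ (hωpos s)] at h1
    linarith [h1]
  have hKbd : ∀ s, 1 / ω s ≤ K := by
    intro s
    have := hK s
    rwa [abs_of_pos (one_div_pos.mpr (hωpos s))] at this
  have hone : ∀ u, 1 ≤ ω u * K := by
    intro u
    have := hKbd u
    rw [div_le_iff₀ (hωpos u)] at this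
    linarith
  have hfabs : Summable fun u => |f u| := by
    apply Summable.of_nonneg_of_le (fun u => abs_nonneg _) (fun u => ?_) (hf.mul_right K)
    nlinarith [abs_nonneg (f u), hone u]
  set L := ∑' u, |f u| * ω u with hLdef
  set I := ∑' u, |f u| with hIdef
  have hL0 : 0 ≤ L := tsum_nonneg fun u => mul_nonneg (abs_nonneg _) (hωpos u).le
  have hI0 : 0 ≤ I := tsum_nonneg fun u => abs_nonneg _
  have hIKL : I ≤ K * L := by
    have hle : ∀ u, |f u| ≤ K * (|f u| * ω u) := by
      intro u
      nlinarith [abs_nonneg (f u), hone u]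
    have := Summable.tsum_le_tsum hle hfabs (hf.mul_left K)
    rwa [tsum_mul_left] at this
  have hsum : ∀ r, Summable fun u => |f u * φ (m u r)| := by
    intro r
    apply Summable.of_nonneg_of_le (fun u => abs_nonneg _) (fun u => ?_)
      (hf.mul_right (M * ω r))
    rw [abs_mul]
    calc |f u| * |φ (m u r)| ≤ |f u| * (M * ω (m u r)) :=
          mul_le_mul_of_nonneg_left (hφbd _) (abs_nonneg _)
      _ ≤ |f u| * (M * (ω u * ω r)) := by
          apply mul_le_mul_of_nonneg_left _ (abs_nonneg _)
          exact mul_le_mul_of_nonneg_left (hm u r) (by linarith)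
      _ = |f u| * ω u * (M * ω r) := by ring
  intro ε hε
  set δ := ε / (2 * (L + 1)) with hδdef
  have hδ : 0 < δ := by positivity
  have hδeq : δ * (2 * (L + 1)) = ε := by
    rw [hδdef]; field_simp
  set B := (hφ δ hδ).toFinset with hBdef
  set C := 1 + ∑ x ∈ B, |φ x| with hCdef
  have hC1 : 1 ≤ C := by
    have : (0:ℝ) ≤ ∑ x ∈ B, |φ x| := Finset.sum_nonneg fun _ _ => abs_nonneg _
    simp only [hCdef]; linarith
  have hCB : ∀ x, δ ≤ |φ x / ω x| → |φ x| ≤ C := by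
    intro x hx
    have hxB : x ∈ B := by
      simp only [hBdef, Set.Finite.mem_toFinset, Set.mem_setOf_eq]; exact hx
    have := Finset.single_le_sum (f := fun x => |φ x|) (fun i _ => abs_nonneg _) hxB
    simp only [hCdef]; linarith
  set δ' := ε / (2 * (C * K * L + 1)) with hδ'def
  have hCKL0 : 0 ≤ C * K * L := by positivity
  have hδ' : 0 < δ' := by positivity
  have hδ'eq : δ' * (2 * (C * K * L + 1)) = ε := by
    rw [hδ'def]; field_simp
  clear_value δ' C B δ I L
  apply (h δ' hδ').subset
  intro r hr
  simp only [Set.mem_setOf_eq] at hr ⊢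
  by_contra hcon
  push_neg at hcon
  have hwr := hωpos r
  have h1r : 1 / ω r < δ' := by
    rwa [abs_of_pos (one_div_pos.mpr hwr)] at hcon
  have h1r' : 1 < δ' * ω r := by
    rw [div_lt_iff₀ hwr] at h1r; linarith
  have hpt : ∀ u, |f u * φ (m u r)| ≤ δ * ω r * (|f u| * ω u) + C * |f u| := by
    intro u
    rw [abs_mul]
    by_cases hx : δ ≤ |φ (m u r) / ω (m u r)|
    · have h2 := mul_le_mul_of_nonneg_left (hCB _ hx) (abs_nonneg (f u))
      have hpos : 0 ≤ δ * ω r * (|f u| * ω u) :=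
        mul_nonneg (mul_nonneg hδ.le hwr.le) (mul_nonneg (abs_nonneg _) (hωpos u).le)
      nlinarith [h2, hpos]
    · push_neg at hx
      have hxpos := hωpos (m u r)
      have h3 : |φ (m u r)| ≤ δ * ω (m u r) := by
        have := hx.le
        rw [abs_div, abs_of_pos hxpos, div_le_iff₀ hxpos] at this
        linarith
      have h5 : 0 ≤ C * |f u| := mul_nonneg (by linarith) (abs_nonneg _)
      calc |f u| * |φ (m u r)| ≤ |f u| * (δ * ω (m u r)) :=
            mul_le_mul_of_nonneg_left h3 (abs_nonneg _)
        _ ≤ |f u| * (δ * (ω u * ω r)) :=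
            mul_le_mul_of_nonneg_left
              (mul_le_mul_of_nonneg_left (hm u r) hδ.le) (abs_nonneg _)
        _ = δ * ω r * (|f u| * ω u) := by ring
        _ ≤ δ * ω r * (|f u| * ω u) + C * |f u| := by linarith
  have hbsum1 : Summable fun u => δ * ω r * (|f u| * ω u) := hf.mul_left _
  have hbsum2 : Summable fun u => C * |f u| := hfabs.mul_left C
  have hT : |∑' u, f u * φ (m u r)| ≤ δ * ω r * L + C * I := by
    have hns : Summable fun u => ‖f u * φ (m u r)‖ := by
      simpa only [Real.norm_eq_abs] using hsum r
    have habs : |∑' u, f u * φ (m u r)| ≤ ∑' u, |f u * φ (m u r)| := by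
      simpa only [Real.norm_eq_abs] using norm_tsum_le_tsum_norm hns
    have hle2 : (∑' u, |f u * φ (m u r)|) ≤ ∑' u, (δ * ω r * (|f u| * ω u) + C * |f u|) :=
      Summable.tsum_le_tsum hpt (hsum r) (hbsum1.add hbsum2)
    have heq : (∑' u, (δ * ω r * (|f u| * ω u) + C * |f u|)) = δ * ω r * L + C * I := by
      rw [Summable.tsum_add hbsum1 hbsum2, tsum_mul_left, tsum_mul_left, ← hLdef, ← hIdef]
    linarith [habs, hle2, heq.le]
  have hA : δ * ω r * L < ε / 2 * ω r := by
    have h6 : δ * L < ε / 2 := by nlinarith [hδeq, hδ]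
    nlinarith [mul_lt_mul_of_pos_right h6 hwr]
  have hB2 : C * K * L < ε / 2 * ω r := by
    have hh : δ' * (C * K * L) < δ' * (ε / 2 * ω r) := by
      nlinarith [mul_lt_mul_of_pos_left h1r' (show (0:ℝ) < ε / 2 by linarith), hδ'eq, hδ']
    exact lt_of_mul_lt_mul_left hh hδ'.le
  have hCI : C * I ≤ C * K * L := by nlinarith [hIKL, hC1, hI0]
  have hfinal : |(∑' u, f u * φ (m u r)) / ω r| < ε := by
    rw [abs_div, abs_of_pos hwr, div_lt_iff₀ hwr]
    linarith [hT, hCI, hA, hB2]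
  linarith [hr, hfinal]


/-- If `1/ω ∈ c₀(S)` then `1_{t⁻¹s}/ω, 1_{st⁻¹}/ω ∈ c₀(S)` for all `s,t`, and hence
`ℓ¹(S,ω)` is a dual Banach algebra with predual `c₀(S)`. -/
theorem dual_of_inv_weight_c0 {S : Type*} [Semigroup S] {ω : S → ℝ} (hω : IsWeight ω)
    (h : IsC0 fun s => 1 / ω s) :
    (∀ s t : S,
        (IsC0 fun r => Set.indicator {r | t * r = s} (1 : S → ℝ) r / ω r) ∧
        (IsC0 fun r => Set.indicator {r | r * t = s} (1 : S → ℝ) r / ω r)) ∧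
      (∀ φ : S → ℝ, IsC0w ω φ → ∀ f : S → ℝ, MemL1 ω f →
        IsC0w ω (act f φ) ∧ IsC0w ω (actR f φ)) := by
  obtain ⟨hpos, hsub⟩ := hω
  refine ⟨fun s t => ⟨ind_c0_s9 hpos h _, ind_c0_s9 hpos h _⟩, fun φ hφ f hf => ?_⟩
  constructor
  · exact key_c0 hpos h φ f hφ hf (fun u r => u * r) (fun u r => hsub u r)
  · exact key_c0 hpos h φ f hφ hf (fun u r => r * u)
      (fun u r => (hsub r u).trans_eq (mul_comm _ _))
end

section
/- Let S₁ be a weakly cancellative semigroup with weight ω₁, and S₂ a semigroup with weight ω₂ satisfying 1/ω₂ ∈ c₀(S₂). Then for the product semigroup S₁ × S₂ with weight ω(x,y) = ω₁(x)ω₂(y), the functions 1_{(s,t)(s',t')⁻¹}/ω and 1_{(s',t')⁻¹(s,t)}/ω belong to c₀(S₁ × S₂) for all (s,t), (s',t') ∈ S₁ × S₂; hence ℓ¹(S₁×S₂, ω₁×ω₂) is a dual Banach algebra with predual c₀(S₁×S₂). -/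
open Set Filter

lemma isC0_of_approx {S : Type*} {g : S → ℝ}
    (h : ∀ δ > (0:ℝ), ∃ g' : S → ℝ, IsC0 g' ∧ ∀ x, |g x - g' x| ≤ δ) : IsC0 g := by
  intro ε hε
  obtain ⟨g', hg', hd⟩ := h (ε/2) (by linarith)
  refine (hg' (ε/2) (by linarith)).subset ?_
  intro x hx
  simp only [mem_setOf_eq] at hx ⊢
  have := hd x
  have := abs_sub_abs_le_abs_sub (g x) (g' x)
  linarith

lemma isC0_const_mul {S : Type*} {g : S → ℝ} (c : ℝ) (h : IsC0 g) :
    IsC0 fun x => c * g x := by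
  intro ε hε
  rcases eq_or_ne c 0 with rfl | hc
  · convert Set.finite_empty
    ext x; simp; linarith
  · refine (h (ε / |c|) (by positivity)).subset ?_
    intro x hx
    simp only [mem_setOf_eq, abs_mul] at hx ⊢
    rw [div_le_iff₀ (by positivity)]
    linarith [hx]

lemma isC0_add {S : Type*} {g h : S → ℝ} (hg : IsC0 g) (hh : IsC0 h) :
    IsC0 fun x => g x + h x := by
  intro ε hε
  refine ((hg (ε/2) (by linarith)).union (hh (ε/2) (by linarith))).subset ?_
  intro x hx
  simp only [mem_setOf_eq, mem_union] at hx ⊢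
  by_contra hcon
  push_neg at hcon
  have := abs_add_le (g x) (h x)
  linarith [hcon.1, hcon.2]

lemma isC0_finset_sum {S ι : Type*} (s : Finset ι) (g : ι → S → ℝ)
    (h : ∀ i ∈ s, IsC0 (g i)) : IsC0 fun x => ∑ i ∈ s, g i x := by
  classical
  induction s using Finset.induction_on with
  | empty => intro ε hε; convert Set.finite_empty; ext x; simp; linarith
  | insert _ _ hni ih =>
    rename_i a s
    simp only [Finset.sum_insert hni]
    exact isC0_add (h a (Finset.mem_insert_self a s))
      (ih fun i hi => h i (Finset.mem_insert_of_mem hi))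

lemma isC0_bounded {S : Type*} {g : S → ℝ} (h : IsC0 g) :
    ∃ C : ℝ, 0 < C ∧ ∀ x, |g x| ≤ C := by
  classical
  refine ⟨1 + ∑ y ∈ (h 1 one_pos).toFinset, |g y|, by
    positivity, fun x => ?_⟩
  by_cases hx : 1 ≤ |g x|
  · have hmem : x ∈ (h 1 one_pos).toFinset := by simpa using hx
    have := Finset.single_le_sum (f := fun y => |g y|)
      (fun y _ => abs_nonneg _) hmem
    have hnn : (0:ℝ) ≤ ∑ y ∈ (h 1 one_pos).toFinset, |g y| :=
      Finset.sum_nonneg fun y _ => abs_nonneg _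
    linarith
  · push_neg at hx
    have hnn : (0:ℝ) ≤ ∑ y ∈ (h 1 one_pos).toFinset, |g y| :=
      Finset.sum_nonneg fun y _ => abs_nonneg _
    linarith

set_option maxHeartbeats 1000000 in
lemma key_act {T : Type*} (ω : T → ℝ) (hpos : ∀ t, 0 < ω t)
    (μ : T → T → T) (hsub : ∀ u r, ω (μ u r) ≤ ω u * ω r)
    (hind : ∀ p u : T, IsC0 fun r => Set.indicator {r | μ u r = p} (1 : T → ℝ) r / ω r)
    (φ : T → ℝ) (hφ : IsC0 fun t => φ t / ω t)
    (f : T → ℝ) (hf : Summable fun t => |f t| * ω t) :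
    IsC0 fun r => (∑' u, f u * φ (μ u r)) / ω r := by
  classical
  obtain ⟨C, hC0, hC⟩ := isC0_bounded hφ
  -- pointwise bound |φ t| ≤ C * ω t
  have hφb : ∀ t, |φ t| ≤ C * ω t := by
    intro t
    have h1 : |φ t / ω t| ≤ C := hC t
    have h2 : |φ t| / ω t ≤ C := by rwa [abs_div, abs_of_pos (hpos t)] at h1
    exact (div_le_iff₀ (hpos t)).mp h2
  -- summability of the inner sum, for each r
  have hsumabs : ∀ r, Summable fun u => |f u * φ (μ u r)| := by
    intro r
    refine Summable.of_nonneg_of_le (fun u => abs_nonneg _) (fun u => ?_) (hf.mul_right (C * ω r))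
    · rw [abs_mul]
      calc |f u| * |φ (μ u r)| ≤ |f u| * (C * ω (μ u r)) := by
            apply mul_le_mul_of_nonneg_left (hφb _) (abs_nonneg _)
      _ ≤ |f u| * (C * (ω u * ω r)) := by
            apply mul_le_mul_of_nonneg_left _ (abs_nonneg _)
            exact mul_le_mul_of_nonneg_left (hsub u r) hC0.le
      _ = |f u| * ω u * (C * ω r) := by ring
  have hsum : ∀ r, Summable fun u => f u * φ (μ u r) := fun r => (hsumabs r).of_abs
  -- step C : for each fixed u, r ↦ φ (μ u r) / ω r is c₀
  have stepC : ∀ u : T, IsC0 fun r => φ (μ u r) / ω r := by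
    intro u
    apply isC0_of_approx
    intro δ hδ
    set K := ω u with hK
    have hKpos : 0 < K := hpos u
    have hG : {v | δ / K ≤ |φ v / ω v|}.Finite := hφ (δ / K) (by positivity)
    refine ⟨fun r => ∑ v ∈ hG.toFinset,
      φ v * (Set.indicator {r | μ u r = v} (1 : T → ℝ) r / ω r), ?_, ?_⟩
    · exact isC0_finset_sum _ _ fun v _ => isC0_const_mul _ (hind v u)
    · intro r
      have hterm : ∀ v, φ v * (Set.indicator {r | μ u r = v} (1 : T → ℝ) r / ω r)
          = if μ u r = v then φ v / ω r else 0 := by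
        intro v
        rw [Set.indicator_apply]
        simp only [mem_setOf_eq, Pi.one_apply]
        split_ifs <;> simp [mul_one_div, div_eq_mul_inv]
      simp only [hterm, Finset.sum_ite_eq]
      by_cases hmem : μ u r ∈ hG.toFinset
      · simp [hmem, hδ.le]
      · simp only [hmem, if_false, sub_zero]
        have hv : |φ (μ u r) / ω (μ u r)| < δ / K := by
          by_contra hcon
          push_neg at hcon
          exact hmem (by simpa using hcon)
        set v := μ u r
        have hωv : 0 < ω v := hpos v
        have h1 : |φ v| * K < δ * ω v := by
          rw [abs_div, abs_of_pos hωv, div_lt_div_iff₀ hωv hKpos] at hv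
          linarith
        have h2 : ω v ≤ K * ω r := hsub u r
        have h3 : |φ v| < δ * ω r := by
          have := mul_le_mul_of_nonneg_left h2 hδ.le
          nlinarith [hpos r]
        rw [abs_div, abs_of_pos (hpos r), div_le_iff₀ (hpos r)]
        linarith
  -- step A : approximate by finite partial sums
  apply isC0_of_approx
  intro δ hδ
  have htail := tendsto_tsum_compl_atTop_zero (fun t => |f t| * ω t)
  have hev : ∀ᶠ F : Finset T in atTop,
      |∑' u : {x // x ∉ F}, |f ↑u| * ω ↑u| < δ / C := by
    have := htail.eventually (eventually_abs_sub_lt 0 (by positivity : (0:ℝ) < δ / C))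
    simpa using this
  obtain ⟨F, hF⟩ := hev.exists
  refine ⟨fun r => ∑ u ∈ F, f u * φ (μ u r) / ω r, ?_, ?_⟩
  · exact isC0_finset_sum _ _ fun u _ =>
      (by simpa [mul_div_assoc] using isC0_const_mul (f u) (stepC u))
  · intro r
    have hsplit := Summable.sum_add_tsum_compl (s := F) (hsum r)
    have heq : (∑' u, f u * φ (μ u r)) / ω r - ∑ u ∈ F, f u * φ (μ u r) / ω r
        = (∑' u : {x // x ∉ F}, f ↑u * φ (μ ↑u r)) / ω r := by
      have hcast : (∑' (x : ↑(↑F : Set T)ᶜ), f ↑x * φ (μ (↑x) r))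
          = ∑' (u : {x // x ∉ F}), f ↑u * φ (μ (↑u) r) := rfl
      rw [← hsplit, ← Finset.sum_div, hcast]
      ring
    rw [heq, abs_div, abs_of_pos (hpos r), div_le_iff₀ (hpos r)]
    have hsA : Summable fun u : {x // x ∉ F} => |f ↑u * φ (μ ↑u r)| :=
      (hsumabs r).subtype {x | x ∉ F}
    have hsB : Summable fun u : {x // x ∉ F} => |f ↑u| * ω ↑u * (C * ω r) :=
      (hf.mul_right (C * ω r)).subtype {x | x ∉ F}
    have hb1 : |∑' u : {x // x ∉ F}, f ↑u * φ (μ ↑u r)|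
        ≤ ∑' u : {x // x ∉ F}, |f ↑u * φ (μ ↑u r)| :=
      norm_tsum_le_tsum_norm (f := fun u : {x // x ∉ F} => f ↑u * φ (μ ↑u r)) hsA
    have hb2 : (∑' u : {x // x ∉ F}, |f ↑u * φ (μ ↑u r)|)
        ≤ ∑' u : {x // x ∉ F}, |f ↑u| * ω ↑u * (C * ω r) := by
      refine Summable.tsum_le_tsum (fun u => ?_) hsA hsB
      rw [abs_mul]
      calc |f ↑u| * |φ (μ ↑u r)| ≤ |f ↑u| * (C * ω (μ ↑u r)) :=
            mul_le_mul_of_nonneg_left (hφb _) (abs_nonneg _)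
      _ ≤ |f ↑u| * (C * (ω ↑u * ω r)) := by
            apply mul_le_mul_of_nonneg_left _ (abs_nonneg _)
            exact mul_le_mul_of_nonneg_left (hsub _ r) hC0.le
      _ = |f ↑u| * ω ↑u * (C * ω r) := by ring
    have hb3 : (∑' u : {x // x ∉ F}, |f ↑u| * ω ↑u * (C * ω r))
        = (∑' u : {x // x ∉ F}, |f ↑u| * ω ↑u) * (C * ω r) :=
      tsum_mul_right
    have htail' : (∑' u : {x // x ∉ F}, |f ↑u| * ω ↑u) ≤ δ / C :=
      (le_abs_self _).trans hF.le
    have hnn : (0:ℝ) ≤ C * ω r := mul_nonneg hC0.le (hpos r).le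
    calc |∑' u : {x // x ∉ F}, f ↑u * φ (μ ↑u r)|
        ≤ (∑' u : {x // x ∉ F}, |f ↑u| * ω ↑u) * (C * ω r) := by
          rw [← hb3]; exact hb1.trans hb2
    _ ≤ (δ / C) * (C * ω r) := mul_le_mul_of_nonneg_right htail' hnn
    _ = δ * ω r := by field_simp

lemma part1_aux {S₁ S₂ : Type*} {ω₁ : S₁ → ℝ} {ω₂ : S₂ → ℝ}
    (hω₁pos : ∀ s, 0 < ω₁ s) (hω₂pos : ∀ s, 0 < ω₂ s)
    (h₂ : IsC0 fun y => 1 / ω₂ y)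
    (P : S₁ × S₂ → Prop) (P₁ : S₁ → Prop) (P₂ : S₂ → Prop)
    (hP : ∀ r, P r ↔ P₁ r.1 ∧ P₂ r.2) (hA : {x | P₁ x}.Finite) :
    IsC0 fun r : S₁ × S₂ =>
      Set.indicator {r | P r} (1 : S₁ × S₂ → ℝ) r / (ω₁ r.1 * ω₂ r.2) := by
  intro ε hε
  have hT : (⋃ x ∈ {x | P₁ x}, (fun y => (x, y)) '' {y | ε * ω₁ x ≤ |1 / ω₂ y|}).Finite :=
    hA.biUnion fun x _ => (h₂ (ε * ω₁ x) (mul_pos hε (hω₁pos x))).image _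
  refine hT.subset ?_
  intro r hr
  simp only [mem_setOf_eq] at hr
  have hPr : P r := by
    by_contra h
    rw [Set.indicator_of_notMem (show r ∉ {r | P r} from h)] at hr
    simp at hr
    linarith
  rw [Set.indicator_of_mem (show r ∈ {r | P r} from hPr)] at hr
  have ha := hω₁pos r.1
  have hb := hω₂pos r.2
  have habs : ε ≤ 1 / (ω₁ r.1 * ω₂ r.2) := by
    rwa [Pi.one_apply, abs_div, abs_one, abs_of_pos (mul_pos ha hb)] at hr
  have hineq : ε * ω₁ r.1 ≤ 1 / ω₂ r.2 := by
    rw [le_div_iff₀ (mul_pos ha hb)] at habs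
    rw [le_div_iff₀ hb]
    calc ε * ω₁ r.1 * ω₂ r.2 = ε * (ω₁ r.1 * ω₂ r.2) := by ring
    _ ≤ 1 := habs
  refine Set.mem_biUnion ((hP r).mp hPr).1 ⟨r.2, hineq.trans (le_abs_self _), ?_⟩
  exact Prod.mk.eta

/-- If `S₁` is weakly cancellative with weight `ω₁`, and `ω₂` is a weight on `S₂` with
`1/ω₂ ∈ c₀(S₂)`, then for the product semigroup `S₁ × S₂` with product weight `ω₁ × ω₂`
all the functions `1_{pq⁻¹}/ω, 1_{q⁻¹p}/ω` belong to `c₀(S₁ × S₂)`; hence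
`ℓ¹(S₁×S₂, ω₁×ω₂)` is a dual Banach algebra with predual `c₀(S₁×S₂)`. -/
theorem dual_of_prod {S₁ S₂ : Type*} [Semigroup S₁] [Semigroup S₂]
    {ω₁ : S₁ → ℝ} {ω₂ : S₂ → ℝ} (hω₁ : IsWeight ω₁) (hω₂ : IsWeight ω₂)
    (hS₁ : WeaklyCancellative S₁) (h₂ : IsC0 fun y => 1 / ω₂ y) :
    (∀ p q : S₁ × S₂,
        (IsC0 fun r : S₁ × S₂ =>
          Set.indicator {r | q * r = p} (1 : S₁ × S₂ → ℝ) r / (ω₁ r.1 * ω₂ r.2)) ∧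
        (IsC0 fun r : S₁ × S₂ =>
          Set.indicator {r | r * q = p} (1 : S₁ × S₂ → ℝ) r / (ω₁ r.1 * ω₂ r.2))) ∧
      (∀ φ : S₁ × S₂ → ℝ, IsC0w (fun r => ω₁ r.1 * ω₂ r.2) φ →
        ∀ f : S₁ × S₂ → ℝ, MemL1 (fun r => ω₁ r.1 * ω₂ r.2) f →
          IsC0w (fun r => ω₁ r.1 * ω₂ r.2) (act f φ) ∧
          IsC0w (fun r => ω₁ r.1 * ω₂ r.2) (actR f φ)) := by
  obtain ⟨h₁pos, h₁sub⟩ := hω₁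
  obtain ⟨h₂pos, h₂sub⟩ := hω₂
  have hpos : ∀ r : S₁ × S₂, 0 < ω₁ r.1 * ω₂ r.2 :=
    fun r => mul_pos (h₁pos r.1) (h₂pos r.2)
  have hL : ∀ p q : S₁ × S₂, IsC0 fun r : S₁ × S₂ =>
      Set.indicator {r | q * r = p} (1 : S₁ × S₂ → ℝ) r / (ω₁ r.1 * ω₂ r.2) := by
    intro p q
    refine part1_aux h₁pos h₂pos h₂ _ (fun x => q.1 * x = p.1) (fun y => q.2 * y = p.2)
      (fun r => ?_) ?_
    · exact Prod.ext_iff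
    · simpa using (hS₁ q.1 {p.1}).1
  have hR : ∀ p q : S₁ × S₂, IsC0 fun r : S₁ × S₂ =>
      Set.indicator {r | r * q = p} (1 : S₁ × S₂ → ℝ) r / (ω₁ r.1 * ω₂ r.2) := by
    intro p q
    refine part1_aux h₁pos h₂pos h₂ _ (fun x => x * q.1 = p.1) (fun y => y * q.2 = p.2)
      (fun r => ?_) ?_
    · exact Prod.ext_iff
    · simpa using (hS₁ q.1 {p.1}).2
  have hsubL : ∀ u r : S₁ × S₂,
      ω₁ (u * r).1 * ω₂ (u * r).2 ≤ (ω₁ u.1 * ω₂ u.2) * (ω₁ r.1 * ω₂ r.2) := fun u r => by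
        calc ω₁ (u * r).1 * ω₂ (u * r).2 = ω₁ (u.1 * r.1) * ω₂ (u.2 * r.2) := rfl
        _ ≤ (ω₁ u.1 * ω₁ r.1) * (ω₂ u.2 * ω₂ r.2) :=
            mul_le_mul (h₁sub u.1 r.1) (h₂sub u.2 r.2) (h₂pos _).le
              (mul_nonneg (h₁pos _).le (h₁pos _).le)
        _ = (ω₁ u.1 * ω₂ u.2) * (ω₁ r.1 * ω₂ r.2) := by ring
  have hsubR : ∀ u r : S₁ × S₂,
      ω₁ (r * u).1 * ω₂ (r * u).2 ≤ (ω₁ u.1 * ω₂ u.2) * (ω₁ r.1 * ω₂ r.2) := fun u r => by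
        calc ω₁ (r * u).1 * ω₂ (r * u).2 = ω₁ (r.1 * u.1) * ω₂ (r.2 * u.2) := rfl
        _ ≤ (ω₁ r.1 * ω₁ u.1) * (ω₂ r.2 * ω₂ u.2) :=
            mul_le_mul (h₁sub r.1 u.1) (h₂sub r.2 u.2) (h₂pos _).le
              (mul_nonneg (h₁pos _).le (h₁pos _).le)
        _ = (ω₁ u.1 * ω₂ u.2) * (ω₁ r.1 * ω₂ r.2) := by ring
  refine ⟨fun p q => ⟨hL p q, hR p q⟩, fun φ hφ f hf => ?_⟩
  have hφ' : IsC0 fun t : S₁ × S₂ => φ t / (ω₁ t.1 * ω₂ t.2) := hφ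
  have hf' : Summable fun t : S₁ × S₂ => |f t| * (ω₁ t.1 * ω₂ t.2) := hf
  have k1 := key_act (fun r : S₁ × S₂ => ω₁ r.1 * ω₂ r.2) hpos (fun u r => u * r)
    hsubL (fun p u => hL p u) φ hφ' f hf'
  have k2 := key_act (fun r : S₁ × S₂ => ω₁ r.1 * ω₂ r.2) hpos (fun u r => r * u)
    hsubR (fun p u => hR p u) φ hφ' f hf'
  exact ⟨k1, k2⟩
end
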